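/- Let T be a well-formed decision tree with classifier κ_T, and let v ∈ 𝔽 with κ_T(v) = c. A feature i ∈ F belongs to some abductive explanation (AXp) of κ_T at v if and only if i belongs to some subset-inclusion-minimal element of the family { Free(P) : P a root-to-leaf path of T whose leaf class is different from c }. (This is the content of the result that AXp/CXp membership for tree explanation graphs is decidable in polynomial time.) -/

import Mathlib

/-- A (multi-valued, univariate) decision tree over `m` features with domains
`D i` and classes `K`: a leaf carries a class, and an internal node carries a
tested feature `i` together with a finite nonempty family of children (indexed
by `Fin (n+1)`), each child labeled with a subset of `D i`. -/
inductive DTree (m : ℕ) (D : Fin m → Type) (K : Type) : Type where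
  | leaf : K → DTree m D K
  | node : (i : Fin m) → (n : ℕ) → (Fin (n + 1) → Set (D i)) →
      (Fin (n + 1) → DTree m D K) → DTree m D K

namespace DTree

variable {m : ℕ} {D : Fin m → Type} {K : Type}

/-- `PathTo T p c` holds when `p` is the list of edges (each recording the
tested feature and the edge's label) of a root-to-leaf path of `T` whose leaf
carries class `c`. -/
inductive PathTo : DTree m D K → List (Σ i : Fin m, Set (D i)) → K → Prop where
  | leaf (c : K) : PathTo (.leaf c) [] c
  | node {i : Fin m} {n : ℕ} {lab : Fin (n + 1) → Set (D i)}
      {ch : Fin (n + 1) → DTree m D K} (k : Fin (n + 1))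
      {p : List (Σ i : Fin m, Set (D i))} {c : K} :
      PathTo (ch k) p c → PathTo (.node i n lab ch) (⟨i, lab k⟩ :: p) c

/-- A path `p` is consistent with a point `x` of feature space if `x i ∈ E`
for every edge of `p` testing feature `i` with label `E`. -/
def Consistent (x : ∀ i, D i) (p : List (Σ i : Fin m, Set (D i))) : Prop :=
  ∀ e ∈ p, x e.1 ∈ e.2

/-- At every internal node, the children's labels are pairwise disjoint and
their union is the whole domain of the tested feature. -/
inductive Partitioned : DTree m D K → Prop where
  | leaf (c : K) : Partitioned (.leaf c)
  | node {i : Fin m} {n : ℕ} {lab : Fin (n + 1) → Set (D i)}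
      {ch : Fin (n + 1) → DTree m D K} :
      (∀ k k' : Fin (n + 1), k ≠ k' → lab k ∩ lab k' = ∅) →
      (∀ d : D i, ∃ k : Fin (n + 1), d ∈ lab k) →
      (∀ k : Fin (n + 1), Partitioned (ch k)) →
      Partitioned (.node i n lab ch)

/-- No root-to-leaf path of `T` is inconsistent: along every root-to-leaf
path, for every feature `i`, the intersection of the labels of the edges
testing `i` on that path is nonempty. -/
def NoInconsistentPath (T : DTree m D K) : Prop :=
  ∀ (p : List (Σ i : Fin m, Set (D i))) (c : K), T.PathTo p c →
    ∀ i : Fin m, ∃ d : D i,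
      ∀ E : Set (D i), (⟨i, E⟩ : Σ j : Fin m, Set (D j)) ∈ p → d ∈ E

/-- A decision tree is well-formed if every node's children's labels partition
the tested feature's domain and no root-to-leaf path is inconsistent. -/
def WellFormed (T : DTree m D K) : Prop := T.Partitioned ∧ T.NoInconsistentPath

/-- `Free v p` is the set of features `i` such that some edge of `p` tests `i`
with a label `E` with `v i ∉ E`. -/
def Free (v : ∀ i, D i) (p : List (Σ i : Fin m, Set (D i))) : Set (Fin m) :=
  {i | ∃ E : Set (D i), (⟨i, E⟩ : Σ j : Fin m, Set (D j)) ∈ p ∧ v i ∉ E}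

end DTree

/-- `X` is a weak abductive explanation (weak AXp) for classifier `κ` at point
`v`. -/
def WeakAXp {m : ℕ} {D : Fin m → Type} {K : Type} (κ : (∀ i, D i) → K)
    (v : ∀ i, D i) (X : Set (Fin m)) : Prop :=
  ∀ x : ∀ i, D i, (∀ i ∈ X, x i = v i) → κ x = κ v

/-- `Y` is a weak contrastive explanation (weak CXp) for `κ` at `v`. -/
def WeakCXp {m : ℕ} {D : Fin m → Type} {K : Type} (κ : (∀ i, D i) → K)
    (v : ∀ i, D i) (Y : Set (Fin m)) : Prop :=
  ∃ x : ∀ i, D i, (∀ j ∉ Y, x j = v j) ∧ κ x ≠ κ v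

/-- An AXp is a subset-inclusion-minimal weak AXp. -/
def AXp {m : ℕ} {D : Fin m → Type} {K : Type} (κ : (∀ i, D i) → K)
    (v : ∀ i, D i) (X : Set (Fin m)) : Prop :=
  WeakAXp κ v X ∧ ∀ X' : Set (Fin m), X' ⊂ X → ¬ WeakAXp κ v X'

/-- A CXp is a subset-inclusion-minimal weak CXp. -/
def CXp {m : ℕ} {D : Fin m → Type} {K : Type} (κ : (∀ i, D i) → K)
    (v : ∀ i, D i) (Y : Set (Fin m)) : Prop :=
  WeakCXp κ v Y ∧ ∀ Y' : Set (Fin m), Y' ⊂ Y → ¬ WeakCXp κ v Y'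

section Aux

variable {m : ℕ} {D : Fin m → Type} {K : Type}

/-- Every point of feature space has a consistent root-to-leaf path. -/
lemma exists_consistent_path (T : DTree m D K) (hP : T.Partitioned)
    (x : ∀ i, D i) : ∃ p c, T.PathTo p c ∧ DTree.Consistent x p := by
  induction T with
  | leaf c => exact ⟨[], c, .leaf c, by intro e he; simp at he⟩
  | node i n lab ch ih =>
    cases hP with
    | node hdisj hcover hch =>
      obtain ⟨k, hk⟩ := hcover (x i)
      obtain ⟨p, c, hp, hc⟩ := ih k (hch k)
      refine ⟨⟨i, lab k⟩ :: p, c, .node k hp, ?_⟩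
      intro e he
      rcases List.mem_cons.1 he with h | h
      · subst h; exact hk
      · exact hc e h

/-- A weak AXp is exactly a hitting set for the family of `Free` sets of
paths with a class different from the prediction. -/
lemma weakAXp_iff_hits (T : DTree m D K) (hT : T.WellFormed)
    (κ : (∀ i, D i) → K)
    (hκ : ∀ (x : ∀ i, D i) (p : List (Σ i : Fin m, Set (D i))) (c : K),
      T.PathTo p c → DTree.Consistent x p → κ x = c)
    (v : ∀ i, D i) (X : Set (Fin m)) :
    WeakAXp κ v X ↔ ∀ (p : List (Σ i : Fin m, Set (D i))) (c' : K),
      T.PathTo p c' → c' ≠ κ v → ∃ j, j ∈ X ∧ j ∈ DTree.Free v p := by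
  classical
  constructor
  · intro hX p c' hp hne
    by_contra hno
    push_neg at hno
    -- build a point consistent with p agreeing with v on X
    set x : ∀ j, D j := fun j =>
      if h : j ∈ DTree.Free v p then Classical.choose (hT.2 p c' hp j) else v j with hxdef
    have hxcons : DTree.Consistent x p := by
      intro e he
      by_cases h : e.1 ∈ DTree.Free v p
      · have hx : x e.1 = Classical.choose (hT.2 p c' hp e.1) := by
          simp [hxdef, h]
        rw [hx]
        exact Classical.choose_spec (hT.2 p c' hp e.1) e.2 (by simpa using he)
      · have hx : x e.1 = v e.1 := by simp [hxdef, h]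
        rw [hx]
        by_contra hv
        exact h ⟨e.2, by simpa using he, hv⟩
    have hagree : ∀ j ∈ X, x j = v j := by
      intro j hj
      have : j ∉ DTree.Free v p := hno j hj
      simp [hxdef, this]
    have := hκ x p c' hp hxcons
    exact hne (this ▸ hX x hagree)
  · intro hhit x hx
    obtain ⟨p, c, hp, hc⟩ := exists_consistent_path T hT.1 x
    have hxc : κ x = c := hκ x p c hp hc
    by_contra hne
    have hcn : c ≠ κ v := fun h => hne (hxc.trans h)
    obtain ⟨j, hjX, E, hEp, hvE⟩ := hhit p c hp hcn
    have : x j ∈ E := hc ⟨j, E⟩ hEp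
    rw [hx j hjX] at this
    exact hvE this

/-- `Free` sets of paths with a class different from the prediction are
nonempty. -/
lemma free_nonempty (T : DTree m D K) (κ : (∀ i, D i) → K)
    (hκ : ∀ (x : ∀ i, D i) (p : List (Σ i : Fin m, Set (D i))) (c : K),
      T.PathTo p c → DTree.Consistent x p → κ x = c)
    (v : ∀ i, D i) {p : List (Σ i : Fin m, Set (D i))} {c' : K}
    (hp : T.PathTo p c') (hne : c' ≠ κ v) : (DTree.Free v p).Nonempty := by
  by_contra h
  rw [Set.not_nonempty_iff_eq_empty] at h
  have hvc : DTree.Consistent v p := by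
    intro e he
    by_contra hv
    have : e.1 ∈ DTree.Free v p := ⟨e.2, by simpa using he, hv⟩
    simp [h] at this
  exact hne ((hκ v p c' hp hvc).symm)

/-- Any nonempty family of sets over a finite type has a minimal element. -/
lemma exists_min_set (S : Set (Set (Fin m))) (hS : S.Nonempty) :
    ∃ Y ∈ S, ∀ Z ∈ S, Z ⊆ Y → Z = Y := by
  obtain ⟨Y, hYS, hmin⟩ :=
    (Set.toFinite S).exists_minimal hS
  exact ⟨Y, hYS, fun Z hZ hZY => Set.Subset.antisymm hZY (hmin hZ hZY)⟩

end Aux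

/-- For a well-formed decision tree `T` with classifier `κ` and instance `v`
(with prediction `κ v`), a feature `i` belongs to some AXp of `κ` at `v` iff
`i` belongs to some subset-inclusion-minimal element of the family of all
`Free v p`, for `p` a root-to-leaf path of `T` whose leaf class differs from
`κ v`. -/
theorem axp_membership_iff_minimal_free_membership {m : ℕ} {D : Fin m → Type}
    {K : Type} [∀ i, Nonempty (D i)]
    (T : DTree m D K) (hT : T.WellFormed) (κ : (∀ i, D i) → K)
    (hκ : ∀ (x : ∀ i, D i) (p : List (Σ i : Fin m, Set (D i))) (c : K),
      T.PathTo p c → DTree.Consistent x p → κ x = c)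
    (v : ∀ i, D i) (i : Fin m) :
    (∃ X : Set (Fin m), AXp κ v X ∧ i ∈ X) ↔
    (∃ Y : Set (Fin m),
      ((∃ (p : List (Σ i : Fin m, Set (D i))) (c' : K),
          T.PathTo p c' ∧ c' ≠ κ v ∧ Y = DTree.Free v p) ∧
       ∀ Z : Set (Fin m),
         (∃ (p : List (Σ i : Fin m, Set (D i))) (c' : K),
             T.PathTo p c' ∧ c' ≠ κ v ∧ Z = DTree.Free v p) →
         Z ⊆ Y → Z = Y) ∧
      i ∈ Y) := by
  classical
  have hits := weakAXp_iff_hits T hT κ hκ v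
  constructor
  · rintro ⟨X, ⟨hXw, hXmin⟩, hiX⟩
    -- X \ {i} is not a weak AXp
    have hssub : X \ {i} ⊂ X := by
      constructor
      · exact Set.diff_subset
      · intro hsub
        have := hsub hiX
        simp at this
    have hnw : ¬ WeakAXp κ v (X \ {i}) := hXmin _ hssub
    rw [hits] at hnw
    push_neg at hnw
    obtain ⟨p, c', hp, hne, hmiss⟩ := hnw
    -- X hits Free v p, and the only hit can be i
    -- minimize among bad sets contained in Free v p
    set S : Set (Set (Fin m)) := {W | (∃ (q : List (Σ i : Fin m, Set (D i))) (c' : K),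
        T.PathTo q c' ∧ c' ≠ κ v ∧ W = DTree.Free v q) ∧ W ⊆ DTree.Free v p} with hSdef
    obtain ⟨Y, ⟨hYbad, hYsub⟩, hYmin⟩ :=
      exists_min_set S ⟨DTree.Free v p, ⟨p, c', hp, hne, rfl⟩, subset_rfl⟩
    refine ⟨Y, ⟨hYbad, ?_⟩, ?_⟩
    · intro Z hZbad hZY
      exact hYmin Z ⟨hZbad, hZY.trans hYsub⟩ hZY
    · -- i ∈ Y : X hits Y, and X ∩ Y ⊆ X ∩ Free v p ⊆ {i}
      obtain ⟨q, c'', hq, hne'', hYeq⟩ := hYbad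
      obtain ⟨k, hkX, hkY⟩ := (hits X).1 hXw q c'' hq hne''
      have hkY' : k ∈ Y := hYeq ▸ hkY
      have hki : k = i := by
        by_contra hki
        exact hmiss k ⟨hkX, hki⟩ (hYsub hkY')
      exact hki ▸ hkY'
  · rintro ⟨Y, ⟨⟨p, c', hp, hne, hYeq⟩, hYmin⟩, hiY⟩
    -- X₀ := {i} ∪ Yᶜ is a weak AXp
    set X₀ : Set (Fin m) := insert i Yᶜ with hX₀def
    have hX₀w : WeakAXp κ v X₀ := by
      rw [hits]
      intro q c'' hq hne''
      by_cases hsub : DTree.Free v q ⊆ Y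
      · have : DTree.Free v q = Y := hYmin _ ⟨q, c'', hq, hne'', rfl⟩ hsub
        exact ⟨i, Or.inl rfl, this ▸ hiY⟩
      · obtain ⟨j, hjF, hjY⟩ := Set.not_subset.1 hsub
        exact ⟨j, Or.inr hjY, hjF⟩
    -- minimize among weak AXps contained in X₀
    obtain ⟨X, ⟨hXw, hXsub⟩, hXmin⟩ :=
      exists_min_set {W | WeakAXp κ v W ∧ W ⊆ X₀} ⟨X₀, hX₀w, subset_rfl⟩
    refine ⟨X, ⟨hXw, ?_⟩, ?_⟩
    · intro X' hX' hX'w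
      have : X' = X := hXmin X' ⟨hX'w, hX'.1.trans hXsub⟩ hX'.1
      exact hX'.2 (this ▸ subset_rfl)
    · -- i ∈ X : X hits Y, and X₀ ∩ Y = {i}
      obtain ⟨j, hjX, hjF⟩ := (hits X).1 hXw p c' hp hne
      have hjY : j ∈ Y := hYeq ▸ hjF
      rcases hXsub hjX with h | h
      · exact h ▸ hjX
      · exact absurd hjY h
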